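/- Let D ⊆ ℂ be an open disk centered at 0 and let φ : D ∖ {0} → End_ℂ(A) be holomorphic and not identically zero, satisfying the multiplicativity identity φ(u1+u2)(X·Y) = φ(u1)(X)·φ(u2)(Y) for all X, Y ∈ A and all u1, u2 ∈ D ∖ {0} with u1+u2 ∈ D ∖ {0}. Then there exist λ ∈ ℂ and an invertible matrix T ∈ GL_N(ℂ) such that φ(u)(X) = exp(λu)·T·X·T^{-1} for all u ∈ D ∖ {0} and all X ∈ A. In particular every φ(u) is an invertible linear map and φ extends holomorphically to all of D. -/

import Mathlib

noncomputable section

open Set Metric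
open scoped Matrix

/-- The algebra of `N × N` complex matrices. -/
abbrev Mat (N : ℕ) := Matrix (Fin N) (Fin N) ℂ

lemma hSopen (ε : ℝ) : IsOpen (Metric.ball (0:ℂ) ε \ {0}) :=
  Metric.isOpen_ball.sdiff isClosed_singleton

lemma hSconn (ε : ℝ) (hε : 0 < ε) : IsPreconnected (Metric.ball (0:ℂ) ε \ {0}) := by
  have hrank : 1 < Module.rank ℝ ℂ := by
    rw [Complex.rank_real_complex]; norm_num
  have h1 : IsPathConnected ((fun p : ℝ × ℂ => p.1 • p.2) ''
      ((Set.Ioo (0:ℝ) ε) ×ˢ (Metric.sphere (0:ℂ) 1))) := by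
    apply IsPathConnected.image
    · -- product of path connected sets is path connected
      obtain ⟨a, ha, hA⟩ := (convex_Ioo (0:ℝ) ε).isPathConnected ⟨ε/2, by constructor <;> linarith⟩
      obtain ⟨b, hb, hB⟩ := isPathConnected_sphere hrank (0:ℂ) zero_le_one
      refine ⟨(a, b), Set.mk_mem_prod ha hb, ?_⟩
      rintro ⟨x, y⟩ ⟨hx, hy⟩
      obtain ⟨γ1, hγ1⟩ := hA hx
      obtain ⟨γ2, hγ2⟩ := hB hy
      exact ⟨γ1.prod γ2, fun t => ⟨hγ1 t, hγ2 t⟩⟩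
    · exact continuous_fst.smul continuous_snd
  have h2 : (fun p : ℝ × ℂ => p.1 • p.2) ''
      ((Set.Ioo (0:ℝ) ε) ×ˢ (Metric.sphere (0:ℂ) 1)) = Metric.ball (0:ℂ) ε \ {0} := by
    ext x
    constructor
    · rintro ⟨⟨t, z⟩, ⟨⟨ht0, htε⟩, hz⟩, rfl⟩
      rw [mem_sphere_zero_iff_norm] at hz
      have hn : ‖t • z‖ = t := by
        rw [norm_smul, hz, mul_one, Real.norm_eq_abs, abs_of_pos ht0]
      constructor
      · rw [mem_ball_zero_iff, hn]; exact htε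
      · simp only [mem_singleton_iff]
        intro h
        rw [h, norm_zero] at hn; exact ht0.ne hn
    · rintro ⟨hx, hx0⟩
      rw [mem_ball_zero_iff] at hx
      simp only [mem_singleton_iff] at hx0
      have hxn : 0 < ‖x‖ := norm_pos_iff.mpr hx0
      refine ⟨⟨‖x‖, ‖x‖⁻¹ • x⟩, ⟨⟨hxn, hx⟩, ?_⟩, ?_⟩
      · rw [mem_sphere_zero_iff_norm, norm_smul, norm_inv, norm_norm, inv_mul_cancel₀ hxn.ne']
      · simp only [smul_smul]
        rw [mul_inv_cancel₀ hxn.ne', one_smul]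
  rw [h2] at h1
  exact h1.isConnected.isPreconnected

lemma idThmEv {ε : ℝ} (hε : 0 < ε) {g h : ℂ → ℂ}
    (hg : DifferentiableOn ℂ g (Metric.ball (0:ℂ) ε \ {0}))
    (hh : DifferentiableOn ℂ h (Metric.ball (0:ℂ) ε \ {0}))
    {z₀ : ℂ} (hz₀ : z₀ ∈ Metric.ball (0:ℂ) ε \ {0})
    (heq : g =ᶠ[nhds z₀] h) : Set.EqOn g h (Metric.ball (0:ℂ) ε \ {0}) :=
  (hg.analyticOnNhd (hSopen ε)).eqOn_of_preconnected_of_eventuallyEq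
    (hh.analyticOnNhd (hSopen ε)) (hSconn ε hε) hz₀ heq

lemma idThmFreq {ε : ℝ} (hε : 0 < ε) {g h : ℂ → ℂ}
    (hg : AnalyticOnNhd ℂ g (Metric.ball (0:ℂ) ε \ {0}))
    (hh : AnalyticOnNhd ℂ h (Metric.ball (0:ℂ) ε \ {0}))
    {z₀ : ℂ} (hz₀ : z₀ ∈ Metric.ball (0:ℂ) ε \ {0})
    (heq : ∀ᶠ z in nhdsWithin z₀ {z₀}ᶜ, g z = h z) :
    Set.EqOn g h (Metric.ball (0:ℂ) ε \ {0}) :=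
  hg.eqOn_of_preconnected_of_frequently_eq hh (hSconn ε hε) hz₀ heq.frequently

/-- from the proof of Lemma `pole-aut-lem`: a holomorphic, not
identically zero, multiplicative family `φ(u)` of endomorphisms of `Mat(N, ℂ)` on a
punctured disk is of the form `φ(u)(X) = exp(λu)·T X T⁻¹`; in particular each `φ(u)` is
invertible and `φ` extends holomorphically to the whole disk. -/
theorem stmt19 (N : ℕ) (ε : ℝ) (hε : 0 < ε)
    (φ : ℂ → Mat N →ₗ[ℂ] Mat N)
    (hhol : ∀ (X : Mat N) (i j : Fin N),
      DifferentiableOn ℂ (fun u => ((φ u) X) i j) (Metric.ball (0 : ℂ) ε \ {0}))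
    (hne : ∃ u ∈ Metric.ball (0 : ℂ) ε \ {0}, φ u ≠ 0)
    (hmul : ∀ u1 u2 : ℂ, u1 ∈ Metric.ball (0 : ℂ) ε \ {0} →
      u2 ∈ Metric.ball (0 : ℂ) ε \ {0} → u1 + u2 ∈ Metric.ball (0 : ℂ) ε \ {0} →
      ∀ X Y : Mat N, (φ (u1 + u2)) (X * Y) = (φ u1) X * (φ u2) Y) :
    (∃ (lam : ℂ) (T : Mat N), IsUnit T ∧
      ∀ u ∈ Metric.ball (0 : ℂ) ε \ {0}, ∀ X : Mat N,
        (φ u) X = Complex.exp (lam * u) • (T * X * T⁻¹))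
    ∧ (∀ u ∈ Metric.ball (0 : ℂ) ε \ {0}, Function.Bijective (φ u))
    ∧ (∃ ψ : ℂ → Mat N →ₗ[ℂ] Mat N,
        (∀ u ∈ Metric.ball (0 : ℂ) ε \ {0}, ψ u = φ u) ∧
        ∀ (X : Mat N) (i j : Fin N),
          DifferentiableOn ℂ (fun u => ((ψ u) X) i j) (Metric.ball (0 : ℂ) ε)) := by
  obtain ⟨u₀, hu₀, hφ0⟩ := hne
  rcases Nat.eq_zero_or_pos N with hN | hN
  · exfalso
    exact hφ0 (LinearMap.ext fun X => Matrix.ext fun i _ => (hN ▸ i).elim0)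
  have i0 : Fin N := ⟨0, hN⟩
  set S : Set ℂ := Metric.ball (0:ℂ) ε \ {0} with hSdef
  have hSo : IsOpen S := hSopen ε
  have hmemS : ∀ u : ℂ, u ∈ S ↔ ‖u‖ < ε ∧ u ≠ 0 := by
    intro u
    simp [hSdef, Set.mem_diff, mem_ball_zero_iff]
  have hhalf : ∀ u ∈ S, u / 2 ∈ S := by
    intro u hu
    rw [hmemS] at hu ⊢
    have h2 : ‖u / 2‖ = ‖u‖ / 2 := by
      rw [norm_div]; norm_num
    exact ⟨by rw [h2]; linarith [hu.1, norm_nonneg u], div_ne_zero hu.2 two_ne_zero⟩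
  have hneghalf : ∀ u ∈ S, -(u / 2) ∈ S := by
    intro u hu
    have h := hhalf u hu
    rw [hmemS] at h ⊢
    simpa using h
  have hD : ∀ (X : Mat N) (i j : Fin N),
      DifferentiableOn ℂ (fun u => φ u X i j) S := hhol
  -- Key 2-variable identity, extended to all pairs in S by the identity theorem
  have key2 : ∀ u1 ∈ S, ∀ u2 ∈ S, ∀ X : Mat N,
      φ u1 X * φ u2 1 = φ u1 1 * φ u2 X := by
    intro u1 hu1 u2 hu2 X
    have hEnt : ∀ i j : Fin N, Set.EqOn (fun v => (φ u1 X * φ v 1) i j)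
        (fun v => (φ u1 1 * φ v X) i j) S := by
      intro i j
      have d1 : DifferentiableOn ℂ (fun v => (φ u1 X * φ v 1) i j) S := by
        simp only [Matrix.mul_apply]
        exact DifferentiableOn.fun_sum fun k _ => (hD 1 k j).const_mul _
      have d2 : DifferentiableOn ℂ (fun v => (φ u1 1 * φ v X) i j) S := by
        simp only [Matrix.mul_apply]
        exact DifferentiableOn.fun_sum fun k _ => (hD X k j).const_mul _
      have hopen : IsOpen {v : ℂ | v ∈ S ∧ u1 + v ∈ S} := by
        exact (hSo.preimage continuous_id).inter (hSo.preimage (continuous_const.add continuous_id))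
      have hz : -(u1 / 2) ∈ {v : ℂ | v ∈ S ∧ u1 + v ∈ S} := by
        refine ⟨hneghalf u1 hu1, ?_⟩
        have : u1 + -(u1 / 2) = u1 / 2 := by ring
        rw [this]; exact hhalf u1 hu1
      apply idThmEv hε d1 d2 (hneghalf u1 hu1)
      filter_upwards [hopen.mem_nhds hz] with v hv
      have h1 := hmul u1 v hu1 hv.1 hv.2 X 1
      have h2 := hmul u1 v hu1 hv.1 hv.2 1 X
      rw [mul_one] at h1
      rw [one_mul] at h2
      rw [← h1, ← h2]
    exact Matrix.ext fun i j => hEnt i j hu2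
  -- each φ u has trivial kernel
  have hker : ∀ u ∈ S, ∀ Y : Mat N, φ u Y = 0 → Y = 0 := by
    intro u2 hu2 Y0 hY0
    by_contra hY0ne
    obtain ⟨p, q, hpq⟩ : ∃ p q, Y0 p q ≠ 0 := by
      by_contra hc; push_neg at hc
      exact hY0ne (Matrix.ext fun p q => hc p q)
    have stepA : ∀ X : Mat N, ∀ v ∈ S, φ v (X * Y0) = 0 := by
      intro X
      have hEnt : ∀ i j : Fin N, Set.EqOn (fun v => φ v (X * Y0) i j) (fun _ => 0) S := by
        intro i j
        have hopen : IsOpen {v : ℂ | v ∈ S ∧ v - u2 ∈ S} := by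
          exact (hSo.preimage continuous_id).inter
            (hSo.preimage (continuous_id.sub continuous_const))
        have hz : u2 / 2 ∈ {v : ℂ | v ∈ S ∧ v - u2 ∈ S} := by
          refine ⟨hhalf u2 hu2, ?_⟩
          have : u2 / 2 - u2 = -(u2 / 2) := by ring
          rw [this]; exact hneghalf u2 hu2
        apply idThmEv hε (hD (X * Y0) i j) (differentiableOn_const 0) (hhalf u2 hu2)
        filter_upwards [hopen.mem_nhds hz] with v hv
        have h1 := hmul (v - u2) u2 hv.2 hu2 (by rw [show v - u2 + u2 = v by ring]; exact hv.1) X Y0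
        rw [show v - u2 + u2 = v by ring, hY0, mul_zero] at h1
        simp [h1]
      intro v hv
      exact Matrix.ext fun i j => hEnt i j hv
    have stepB : ∀ X W : Mat N, ∀ v ∈ S, φ v (X * Y0 * W) = 0 := by
      intro X W v hv
      have h := hmul (v / 2) (v / 2) (hhalf v hv) (hhalf v hv)
        (by rw [add_halves]; exact hv) (X * Y0) W
      rw [add_halves] at h
      rw [h, stepA X (v / 2) (hhalf v hv), zero_mul]
    apply hφ0
    apply LinearMap.ext; intro Z
    have hE : ∀ i j : Fin N,
        Matrix.single i p (1:ℂ) * Y0 * Matrix.single q j 1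
          = Y0 p q • Matrix.single i j 1 := by
      intro i j
      ext a b
      by_cases h1 : i = a <;> by_cases h2 : j = b <;>
        simp [Matrix.mul_apply, Matrix.single, Matrix.smul_apply, ite_and,
          Finset.sum_ite_eq, Finset.sum_ite_eq', h1, h2, mul_comm]
    have hEz : ∀ i j : Fin N, φ u₀ (Matrix.single i j (1:ℂ)) = 0 := by
      intro i j
      have h1 := stepB (Matrix.single i p 1) (Matrix.single q j 1) u₀ hu₀
      rw [hE i j, map_smul] at h1
      rcases smul_eq_zero.mp h1 with h | h
      · exact absurd h hpq
      · exact h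
    have hexp := Matrix.matrix_eq_sum_single Z
    calc φ u₀ Z = φ u₀ (∑ i : Fin N, ∑ j : Fin N, Matrix.single i j (Z i j)) := by
          rw [← hexp]
      _ = 0 := by
          rw [map_sum]
          apply Finset.sum_eq_zero
          intro i _
          rw [map_sum]
          apply Finset.sum_eq_zero
          intro j _
          have : Matrix.single i j (Z i j) = (Z i j) • Matrix.single i j (1:ℂ) := by
            ext a b
            simp [Matrix.single, Matrix.smul_apply]
          rw [this, map_smul, hEz, smul_zero]
  have hinj : ∀ u ∈ S, Function.Injective (φ u) := by
    intro u hu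
    exact (injective_iff_map_eq_zero (φ u)).mpr (hker u hu)
  have hbij : ∀ u ∈ S, Function.Bijective (φ u) := by
    intro u hu
    exact ⟨hinj u hu, (LinearMap.injective_iff_surjective).mp (hinj u hu)⟩
    -- cancellation helpers
  have lcancel : ∀ B : Mat N, IsUnit B → ∀ P Q : Mat N, B * P = B * Q → P = Q := by
    intro B hB P Q h
    have hd := (Matrix.isUnit_iff_isUnit_det B).mp hB
    calc P = B⁻¹ * (B * P) := by rw [← Matrix.mul_assoc, Matrix.nonsing_inv_mul B hd, Matrix.one_mul]
      _ = B⁻¹ * (B * Q) := by rw [h]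
      _ = Q := by rw [← Matrix.mul_assoc, Matrix.nonsing_inv_mul B hd, Matrix.one_mul]
  have rcancel : ∀ B : Mat N, IsUnit B → ∀ P Q : Mat N, P * B = Q * B → P = Q := by
    intro B hB P Q h
    have hd := (Matrix.isUnit_iff_isUnit_det B).mp hB
    calc P = P * B * B⁻¹ := by rw [Matrix.mul_assoc, Matrix.mul_nonsing_inv B hd, Matrix.mul_one]
      _ = Q * B * B⁻¹ := by rw [h]
      _ = Q := by rw [Matrix.mul_assoc, Matrix.mul_nonsing_inv B hd, Matrix.mul_one]
  -- φ u 1 is invertible for all u ∈ S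
  have hfU : ∀ u ∈ S, IsUnit (φ u 1) := by
    intro u hu
    have hz : -(u / 2) ∈ S := hneghalf u hu
    have hsum : u + -(u / 2) ∈ S := by
      rw [show u + -(u / 2) = u / 2 by ring]; exact hhalf u hu
    obtain ⟨X, hX⟩ := (hbij (u + -(u / 2)) hsum).2 1
    have h := hmul u (-(u / 2)) hu hz hsum 1 X
    rw [one_mul, hX] at h
    have h2 : φ (-(u / 2)) X * φ u 1 = 1 := mul_eq_one_comm.mp h.symm
    exact ⟨⟨φ u 1, φ (-(u / 2)) X, h.symm, h2⟩, rfl⟩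
  have hB0U : IsUnit (φ u₀ 1) := hfU u₀ hu₀
  have hB0d : IsUnit (φ u₀ 1).det := (Matrix.isUnit_iff_isUnit_det _).mp hB0U
  -- the algebra automorphism α
  set α : Mat N →ₗ[ℂ] Mat N := (LinearMap.mulLeft ℂ (φ u₀ 1)⁻¹).comp (φ u₀) with hαdefn
  have hαapp : ∀ X : Mat N, α X = (φ u₀ 1)⁻¹ * φ u₀ X := fun X => rfl
  have hB0α : ∀ X : Mat N, φ u₀ 1 * α X = φ u₀ X := by
    intro X
    rw [hαapp, ← Matrix.mul_assoc, Matrix.mul_nonsing_inv _ hB0d, Matrix.one_mul]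
  have hαB0 : ∀ X : Mat N, α X * φ u₀ 1 = φ u₀ 1 * α X := by
    intro X
    rw [hαapp, Matrix.mul_assoc, key2 u₀ hu₀ u₀ hu₀ X, ← Matrix.mul_assoc,
      Matrix.nonsing_inv_mul _ hB0d, Matrix.one_mul, ← Matrix.mul_assoc,
      Matrix.mul_nonsing_inv _ hB0d, Matrix.one_mul]
  have hαdef : ∀ u ∈ S, ∀ X : Mat N, φ u X = φ u 1 * α X := by
    intro u hu X
    have h := key2 u hu u₀ hu₀ X
    have h2 : (φ u 1 * α X) * φ u₀ 1 = φ u 1 * φ u₀ X := by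
      rw [Matrix.mul_assoc, hαB0 X, hB0α X]
    exact rcancel _ hB0U _ _ (h.trans h2.symm)
  have hα1 : α (1 : Mat N) = 1 := by
    rw [hαapp]; exact Matrix.nonsing_inv_mul _ hB0d
  have hcommf : ∀ u ∈ S, ∀ X : Mat N, φ u 1 * α X = α X * φ u 1 := by
    intro u hu X
    have h := key2 u hu u hu X
    rw [hαdef u hu X, Matrix.mul_assoc] at h
    exact (lcancel _ (hfU u hu) _ _ h).symm
  have hαmul : ∀ X Y : Mat N, α (X * Y) = α X * α Y := by
    intro X Y
    have hmem : u₀ / 2 ∈ S := hhalf u₀ hu₀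
    have hsum : u₀ / 2 + u₀ / 2 ∈ S := by rw [add_halves]; exact hu₀
    have h := hmul (u₀ / 2) (u₀ / 2) hmem hmem hsum X Y
    rw [add_halves] at h
    have h1 : φ u₀ 1 = φ (u₀ / 2) 1 * φ (u₀ / 2) 1 := by
      have := hmul (u₀ / 2) (u₀ / 2) hmem hmem hsum 1 1
      rw [add_halves, mul_one] at this
      exact this
    have hbb : IsUnit (φ (u₀ / 2) 1 * φ (u₀ / 2) 1) := (hfU _ hmem).mul (hfU _ hmem)
    apply lcancel _ hbb
    have e1 : (φ (u₀ / 2) 1 * φ (u₀ / 2) 1) * α (X * Y) = φ u₀ (X * Y) := by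
      rw [← h1, ← hαdef u₀ hu₀]
    have e2 : φ (u₀ / 2) X * φ (u₀ / 2) Y
        = φ (u₀ / 2) 1 * φ (u₀ / 2) 1 * (α X * α Y) := by
      rw [hαdef _ hmem X, hαdef _ hmem Y]
      simp only [Matrix.mul_assoc]
      rw [← Matrix.mul_assoc (α X), ← hcommf _ hmem X, Matrix.mul_assoc]
    rw [e1, h, e2]
    -- construction of T
  have hαE : α (Matrix.single i0 i0 (1:ℂ)) ≠ 0 := by
    intro h0
    have h1 : φ u₀ (Matrix.single i0 i0 (1:ℂ)) = 0 := by
      rw [hαdef u₀ hu₀, h0, Matrix.mul_zero]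
    have h2 := hker u₀ hu₀ _ h1
    have h3 : Matrix.single i0 i0 (1:ℂ) i0 i0 = 0 := by rw [h2]; rfl
    simp [Matrix.single] at h3
  obtain ⟨p, q, hpq⟩ : ∃ p q, α (Matrix.single i0 i0 (1:ℂ)) p q ≠ 0 := by
    by_contra hc; push_neg at hc
    exact hαE (Matrix.ext fun p q => hc p q)
  set T : Mat N := Matrix.of (fun r i => α (Matrix.single i i0 1) r q) with hTdef
  have hTapp : ∀ r i : Fin N, T r i = α (Matrix.single i i0 1) r q := fun r i => rfl
  have hXE : ∀ (X : Mat N) (j : Fin N), X * Matrix.single j i0 (1:ℂ)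
      = ∑ i : Fin N, X i j • Matrix.single i i0 1 := by
    intro X j
    ext a b
    by_cases hb : i0 = b <;>
      simp [Matrix.mul_apply, Matrix.single, Matrix.sum_apply, ite_and,
        Finset.sum_ite_eq, Finset.sum_ite_eq', Matrix.smul_apply, hb]
  have hT : ∀ X : Mat N, α X * T = T * X := by
    intro X
    apply Matrix.ext
    intro r j
    have h1 : (α X * T) r j = α (X * Matrix.single j i0 1) r q := by
      rw [hαmul, Matrix.mul_apply, Matrix.mul_apply]
      simp only [hTapp]
    have h2 : (T * X) r j = α (X * Matrix.single j i0 1) r q := by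
      rw [hXE, map_sum, Matrix.mul_apply, Matrix.sum_apply]
      apply Finset.sum_congr rfl
      intro i _
      rw [map_smul, Matrix.smul_apply, smul_eq_mul, hTapp, mul_comm]
    rw [h1, h2]
  have hTne : T p i0 ≠ 0 := by rw [hTapp]; exact hpq
  have hTU : IsUnit T := by
    rw [← Matrix.mulVec_injective_iff_isUnit]
    have hker0 : ∀ x : Fin N → ℂ, T *ᵥ x = 0 → x = 0 := by
      intro x hx
      by_contra hxne
      obtain ⟨cc, hcc⟩ : ∃ cc, x cc ≠ 0 := by
        by_contra hc; push_neg at hc; exact hxne (funext hc)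
      apply hTne
      have h1 : T *ᵥ (Matrix.single i0 cc (1:ℂ) *ᵥ x) = 0 := by
        rw [Matrix.mulVec_mulVec, ← hT, ← Matrix.mulVec_mulVec, hx, Matrix.mulVec_zero]
      have h2 : (Matrix.single i0 cc (1:ℂ)) *ᵥ x = Pi.single i0 (x cc) := by
        ext a'
        by_cases hai : a' = i0
        · simp [Matrix.mulVec, dotProduct, Matrix.single, ite_and,
            Pi.single_apply, Finset.sum_ite_eq, Finset.sum_ite_eq', hai]
        · have hai2 : ¬(i0 = a') := fun h => hai h.symm
          simp [Matrix.mulVec, dotProduct, Matrix.single, ite_and,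
            Pi.single_apply, Finset.sum_ite_eq, Finset.sum_ite_eq', hai, hai2]
      rw [h2] at h1
      have h3 := congrFun h1 p
      simp only [Matrix.mulVec_single, Pi.smul_apply, Matrix.col_apply, op_smul_eq_mul,
        Pi.zero_apply] at h3
      exact (mul_eq_zero.mp h3).resolve_right hcc
    intro x y hxy
    have h0 : T *ᵥ (x - y) = 0 := by rw [Matrix.mulVec_sub, hxy, sub_self]
    exact sub_eq_zero.mp (hker0 _ h0)
  have hTdet : IsUnit T.det := (Matrix.isUnit_iff_isUnit_det T).mp hTU
  have hαT : ∀ X : Mat N, α X = T * X * T⁻¹ := by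
    intro X
    calc α X = α X * (T * T⁻¹) := by rw [Matrix.mul_nonsing_inv _ hTdet, Matrix.mul_one]
      _ = (α X * T) * T⁻¹ := by rw [Matrix.mul_assoc]
      _ = (T * X) * T⁻¹ := by rw [hT X]
  -- φ u 1 is a scalar matrix
  have hαsurj : ∀ M : Mat N, ∃ X, α X = M := by
    intro M
    refine ⟨T⁻¹ * M * T, ?_⟩
    rw [hαT]
    calc T * (T⁻¹ * M * T) * T⁻¹ = T * T⁻¹ * M * (T * T⁻¹) := by
          simp only [Matrix.mul_assoc]
      _ = M := by rw [Matrix.mul_nonsing_inv _ hTdet, Matrix.one_mul, Matrix.mul_one]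
  have hcenter : ∀ u ∈ S, ∀ M : Mat N, φ u 1 * M = M * φ u 1 := by
    intro u hu M
    obtain ⟨X, hX⟩ := hαsurj M
    rw [← hX]
    exact hcommf u hu X
  have hscalar : ∀ u ∈ S, φ u 1 = (φ u 1 i0 i0) • (1 : Mat N) := by
    intro u hu
    obtain ⟨r, hr⟩ := Matrix.mem_range_scalar_of_commute_single
      (M := φ u 1) (fun i j _ => (hcenter u hu _).symm)
    have h1 : φ u 1 = r • (1 : Mat N) := by
      rw [← hr]
      ext a b
      simp [Matrix.scalar_apply, Matrix.smul_apply, Matrix.one_apply, Matrix.diagonal_apply]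
    have h2 : φ u 1 i0 i0 = r := by
      rw [h1]
      simp [Matrix.smul_apply, Matrix.one_apply_eq]
    rw [h2]
    exact h1
    -- the scalar function c u = φ u 1 i0 i0
  have hcD : DifferentiableOn ℂ (fun u => φ u 1 i0 i0) S := hD 1 i0 i0
  have hcA : AnalyticOnNhd ℂ (fun u => φ u 1 i0 i0) S := hcD.analyticOnNhd hSo
  have hone : (1 : Mat N) ≠ (0 : Mat N) := by
    intro h
    have h' : (1 : Mat N) i0 i0 = (0 : Mat N) i0 i0 := by rw [h]
    simp [Matrix.one_apply_eq] at h'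
  have hcne : ∀ u ∈ S, φ u 1 i0 i0 ≠ 0 := by
    intro u hu h0
    have h1 := hscalar u hu
    rw [h0, zero_smul] at h1
    obtain ⟨w, hw⟩ := (hfU u hu).exists_left_inv
    rw [h1, Matrix.mul_zero] at hw
    exact hone hw.symm
  have hsmulentry : ∀ a b : ℂ, ((a • (1 : Mat N)) * (b • (1 : Mat N))) i0 i0 = a * b := by
    intro a b
    rw [smul_mul_assoc, mul_smul_comm, Matrix.one_mul]
    simp [Matrix.smul_apply, Matrix.one_apply_eq, smul_eq_mul]
  have hcmul : ∀ u v : ℂ, u ∈ S → v ∈ S → u + v ∈ S →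
      φ (u + v) 1 i0 i0 = φ u 1 i0 i0 * φ v 1 i0 i0 := by
    intro u v hu hv huv
    have h := hmul u v hu hv huv 1 1
    rw [mul_one] at h
    calc φ (u + v) 1 i0 i0 = (φ u 1 * φ v 1) i0 i0 := by rw [h]
      _ = ((φ u 1 i0 i0 • (1 : Mat N)) * (φ v 1 i0 i0 • (1 : Mat N))) i0 i0 := by
          rw [← hscalar u hu, ← hscalar v hv]
      _ = φ u 1 i0 i0 * φ v 1 i0 i0 := hsmulentry _ _
  -- the derivative relation
  have hcat : ∀ u ∈ S, DifferentiableAt ℂ (fun u => φ u 1 i0 i0) u := by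
    intro u hu
    exact hcD.differentiableAt (hSo.mem_nhds hu)
  have hderrel : ∀ u ∈ S, ∀ v ∈ S, u + v ∈ S →
      deriv (fun w => φ w 1 i0 i0) (u + v)
        = deriv (fun w => φ w 1 i0 i0) u * φ v 1 i0 i0 := by
    intro u hu v hv huv
    have hopen : IsOpen {w : ℂ | w ∈ S ∧ w + v ∈ S} :=
      (hSo.preimage continuous_id).inter (hSo.preimage (continuous_id.add continuous_const))
    have hev : (fun w => φ (w + v) 1 i0 i0) =ᶠ[nhds u]
        (fun w => φ w 1 i0 i0 * φ v 1 i0 i0) := by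
      filter_upwards [hopen.mem_nhds ⟨hu, huv⟩] with w hw
      exact hcmul w v hw.1 hv hw.2
    have h1 : deriv (fun w => φ (w + v) 1 i0 i0) u
        = deriv (fun w => φ w 1 i0 i0) (u + v) := deriv_comp_add_const (fun w => φ w 1 i0 i0) v u
    have h2 : deriv (fun w => φ w 1 i0 i0 * φ v 1 i0 i0) u
        = deriv (fun w => φ w 1 i0 i0) u * φ v 1 i0 i0 := deriv_mul_const (hcat u hu) _
    rw [← h1, hev.deriv_eq, h2]
  -- the logarithmic derivative is constant on S
  have hlamA : AnalyticOnNhd ℂ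
      (fun u => deriv (fun w => φ w 1 i0 i0) u / φ u 1 i0 i0) S :=
    (hcA.deriv_of_isOpen hSo).div hcA (fun u hu => hcne u hu)
  set lam : ℂ := deriv (fun w => φ w 1 i0 i0) u₀ / φ u₀ 1 i0 i0 with hlamdef
  have hlamconst : ∀ u ∈ S,
      deriv (fun w => φ w 1 i0 i0) u / φ u 1 i0 i0 = lam := by
    have hEq : Set.EqOn (fun u => deriv (fun w => φ w 1 i0 i0) u / φ u 1 i0 i0)
        (fun _ => lam) S := by
      apply idThmFreq hε hlamA analyticOnNhd_const hu₀
      have hball : ∀ᶠ w in nhds u₀, w ∈ S ∧ w - u₀ ∈ Metric.ball (0:ℂ) ε := by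
        have h1 : ∀ᶠ w in nhds u₀, w ∈ S := hSo.mem_nhds hu₀
        have h2 : ∀ᶠ w in nhds u₀, w - u₀ ∈ Metric.ball (0:ℂ) ε := by
          have hcont : Continuous (fun w : ℂ => w - u₀) := continuous_id.sub continuous_const
          have : (fun w : ℂ => w - u₀) ⁻¹' (Metric.ball (0:ℂ) ε) ∈ nhds u₀ := by
            apply (Metric.isOpen_ball.preimage hcont).mem_nhds
            simp [Metric.mem_ball, hε]
          exact this
        exact h1.and h2
      filter_upwards [eventually_nhdsWithin_of_eventually_nhds hball,
        self_mem_nhdsWithin] with w hw hwne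
      have hwu : w ≠ u₀ := hwne
      have hv : w - u₀ ∈ S := by
        rw [hmemS]
        constructor
        · rw [← mem_ball_zero_iff]; exact hw.2
        · exact sub_ne_zero.mpr hwu
      have := hderrel u₀ hu₀ (w - u₀) hv (by rw [show u₀ + (w - u₀) = w by ring]; exact hw.1)
      rw [show u₀ + (w - u₀) = w by ring] at this
      have hcc := hcmul u₀ (w - u₀) hu₀ hv (by rw [show u₀ + (w - u₀) = w by ring]; exact hw.1)
      rw [show u₀ + (w - u₀) = w by ring] at hcc
      show deriv (fun w => φ w 1 i0 i0) w / φ w 1 i0 i0 = lam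
      rw [this, hcc, hlamdef]
      rw [mul_div_mul_right _ _ (hcne _ hv)]
    intro u hu
    exact hEq hu
  have hderc : ∀ u ∈ S, deriv (fun w => φ w 1 i0 i0) u = lam * φ u 1 i0 i0 := by
    intro u hu
    have h := hlamconst u hu
    rw [div_eq_iff (hcne u hu)] at h
    rw [h, mul_comm]
    -- the function c u * exp (-lam u) is constant on S
  have hgD : DifferentiableOn ℂ (fun u => φ u 1 i0 i0 * Complex.exp (-(lam * u))) S := by
    apply hcD.mul
    apply Differentiable.differentiableOn
    exact ((differentiable_id.const_mul lam).neg).cexp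
  have hgderiv : ∀ u ∈ S,
      HasDerivAt (fun w => φ w 1 i0 i0 * Complex.exp (-(lam * w))) 0 u := by
    intro u hu
    have h1 : HasDerivAt (fun w => φ w 1 i0 i0) (lam * φ u 1 i0 i0) u := by
      have := (hcat u hu).hasDerivAt
      rwa [hderc u hu] at this
    have h2 : HasDerivAt (fun w => Complex.exp (-(lam * w)))
        (Complex.exp (-(lam * u)) * (-lam)) u := by
      have hl : HasDerivAt (fun w : ℂ => -(lam * w)) (-lam) u := by
        simpa using ((hasDerivAt_id u).const_mul lam).fun_neg
      exact hl.cexp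
    have h3 := h1.fun_mul h2
    exact h3.congr_deriv (by ring)
  have hgconst : Set.EqOn (fun u => φ u 1 i0 i0 * Complex.exp (-(lam * u)))
      (fun _ => φ u₀ 1 i0 i0 * Complex.exp (-(lam * u₀))) S := by
    have hu₀n : 0 < ‖u₀‖ := norm_pos_iff.mpr ((hmemS u₀).mp hu₀).2
    set r : ℝ := min (ε - ‖u₀‖) ‖u₀‖ with hrdef
    have hrpos : 0 < r := lt_min (by have := ((hmemS u₀).mp hu₀).1; linarith) hu₀n
    have hball : Metric.ball u₀ r ⊆ S := by
      intro w hw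
      rw [Metric.mem_ball, dist_eq_norm] at hw
      rw [hmemS]
      constructor
      · have h1 : ‖w‖ ≤ ‖u₀‖ + ‖w - u₀‖ := by
          have := norm_add_le u₀ (w - u₀)
          rw [show u₀ + (w - u₀) = w by ring] at this
          exact this
        have h2 : ‖w - u₀‖ < ε - ‖u₀‖ := lt_of_lt_of_le hw (min_le_left _ _)
        linarith
      · intro h0
        rw [h0, zero_sub, norm_neg] at hw
        exact absurd (lt_of_lt_of_le hw (min_le_right _ _)) (lt_irrefl _)
    have hconst : ∀ w ∈ Metric.ball u₀ r,
        (fun u => φ u 1 i0 i0 * Complex.exp (-(lam * u))) w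
          = (fun u => φ u 1 i0 i0 * Complex.exp (-(lam * u))) u₀ := by
      intro w hw
      apply Convex.is_const_of_fderivWithin_eq_zero (convex_ball u₀ r)
        (hgD.mono hball) ?_ hw (Metric.mem_ball_self hrpos)
      intro x hx
      rw [fderivWithin_of_isOpen Metric.isOpen_ball hx]
      have h0 : HasFDerivAt (fun u => φ u 1 i0 i0 * Complex.exp (-(lam * u)))
          (ContinuousLinearMap.smulRight (1 : ℂ →L[ℂ] ℂ) (0:ℂ)) x :=
        hasDerivAt_iff_hasFDerivAt.mp (hgderiv x (hball hx))
      rw [h0.fderiv]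
      ext
      simp
    apply idThmEv hε hgD (differentiableOn_const _) hu₀
    filter_upwards [Metric.ball_mem_nhds u₀ hrpos] with w hw
    exact hconst w hw
  set K : ℂ := φ u₀ 1 i0 i0 * Complex.exp (-(lam * u₀)) with hKdef
  have hcK : ∀ u ∈ S, φ u 1 i0 i0 = K * Complex.exp (lam * u) := by
    intro u hu
    have h := hgconst hu
    simp only at h
    calc φ u 1 i0 i0 = φ u 1 i0 i0 * Complex.exp (-(lam * u)) * Complex.exp (lam * u) := by
          rw [mul_assoc, ← Complex.exp_add]
          simp
      _ = K * Complex.exp (lam * u) := by rw [h]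
  have hKne : K ≠ 0 := by
    intro h0
    have h1 := hcne u₀ hu₀
    rw [hcK u₀ hu₀, h0, zero_mul] at h1
    exact h1 rfl
  have hK1 : K = 1 := by
    have hmem : u₀ / 2 ∈ S := hhalf u₀ hu₀
    have hsum : u₀ / 2 + u₀ / 2 ∈ S := by rw [add_halves]; exact hu₀
    have h := hcmul (u₀ / 2) (u₀ / 2) hmem hmem hsum
    rw [add_halves] at h
    rw [hcK u₀ hu₀, hcK _ hmem] at h
    have h2 : K * Complex.exp (lam * u₀) = K * K * Complex.exp (lam * u₀) := by
      rw [h]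
      calc K * Complex.exp (lam * (u₀/2)) * (K * Complex.exp (lam * (u₀/2)))
          = K * K * (Complex.exp (lam * (u₀/2)) * Complex.exp (lam * (u₀/2))) := by ring
        _ = K * K * Complex.exp (lam * u₀) := by
            rw [← Complex.exp_add, show lam * (u₀/2) + lam * (u₀/2) = lam * u₀ by ring]
    have h3 := mul_right_cancel₀ (Complex.exp_ne_zero (lam * u₀)) h2
    have h4 : K * 1 = K * K := by rw [mul_one]; exact h3
    exact (mul_left_cancel₀ hKne h4).symm
  have hfinal : ∀ u ∈ S, ∀ X : Mat N,
      φ u X = Complex.exp (lam * u) • (T * X * T⁻¹) := by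
    intro u hu X
    rw [hαdef u hu X, hscalar u hu, hcK u hu, hK1, one_mul, hαT X,
      smul_mul_assoc, Matrix.one_mul]
  refine ⟨⟨lam, T, hTU, hfinal⟩, hbij, ?_⟩
  refine ⟨fun u => Complex.exp (lam * u) •
    ((LinearMap.mulRight ℂ T⁻¹).comp (LinearMap.mulLeft ℂ T)), ?_, ?_⟩
  · intro u hu
    apply LinearMap.ext
    intro X
    simp only [LinearMap.smul_apply, LinearMap.comp_apply, LinearMap.mulRight_apply,
      LinearMap.mulLeft_apply]
    rw [hfinal u hu X]
  · intro X i j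
    have heq : (fun u => ((Complex.exp (lam * u) •
        ((LinearMap.mulRight ℂ T⁻¹).comp (LinearMap.mulLeft ℂ T))) X) i j)
        = fun u => Complex.exp (lam * u) * (T * X * T⁻¹) i j := by
      funext u
      simp [LinearMap.smul_apply, LinearMap.comp_apply, LinearMap.mulRight_apply,
        LinearMap.mulLeft_apply, Matrix.smul_apply, smul_eq_mul, Matrix.mul_assoc]
    rw [heq]
    apply Differentiable.differentiableOn
    exact ((differentiable_id.const_mul lam).cexp).mul_const _
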